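/- For any fixed integer n ≥ 2, the sequence m ↦ Φ⁽ⁿ⁾(m)/m is strictly decreasing in m over the positive integers and converges to 1 as m → ∞. -/

import Mathlib

lemma aux_bounds_15 (n m : ℕ) (hn : 2 ≤ n) (hm : 1 ≤ m) (x : ℝ) (hx : 0 < x)
    (heq : x ^ n - (m : ℝ) * ∑ k ∈ Finset.range n, x ^ k = 0) :
    (m : ℝ) < x ∧ x < (m : ℝ) + 1 ∧ (m : ℝ) + 1 - 1 / ((m : ℝ) + 1) < x := by
  have hm1 : (1 : ℝ) ≤ m := by exact_mod_cast hm
  obtain ⟨j, rfl⟩ : ∃ j, n = j + 2 := ⟨n - 2, by omega⟩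
  set S := ∑ k ∈ Finset.range (j + 2), x ^ k with hS
  have hSeq : x ^ (j + 2) = (m : ℝ) * S := by linarith
  have hsplit : S = (∑ k ∈ Finset.range (j + 1), x ^ k) + x ^ (j + 1) :=
    Finset.sum_range_succ _ _
  have h1 : (1 : ℝ) ≤ ∑ k ∈ Finset.range (j + 1), x ^ k := by
    have := Finset.single_le_sum (f := fun k => x ^ k)
      (fun i _ => (pow_pos hx i).le) (Finset.mem_range.mpr (Nat.succ_pos j))
    simpa using this
  have hSlb : 1 + x ^ (j + 1) ≤ S := by rw [hsplit]; linarith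
  have hp : (0 : ℝ) < x ^ (j + 1) := pow_pos hx _
  have hps : x ^ (j + 2) = x ^ (j + 1) * x := pow_succ x (j + 1)
  have hxm : (m : ℝ) < x := by nlinarith [hSeq, hSlb, hp, hps]
  have hgeom : S * (x - 1) = x ^ (j + 2) - 1 := geom_sum_mul x (j + 2)
  have key : x ^ (j + 2) * ((m : ℝ) + 1 - x) = m := by
    linear_combination (1 - x) * hSeq - (m : ℝ) * hgeom
  have hp2 : (0 : ℝ) < x ^ (j + 2) := pow_pos hx _
  have hub : x < (m : ℝ) + 1 := by nlinarith [key, hp2, hm1]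
  have hx1 : (1 : ℝ) ≤ x := by linarith
  have hpow : x ≤ x ^ (j + 1) := le_self_pow₀ hx1 (by omega)
  have hxnlb : (m : ℝ) * ((m : ℝ) + 1) < x ^ (j + 2) := by
    nlinarith [hSeq, hSlb, hpow, hxm, hm1]
  have h3 : ((m : ℝ) + 1 - x) * ((m : ℝ) * ((m : ℝ) + 1)) < m := by
    nlinarith [key, hxnlb, hub]
  have h4 : ((m : ℝ) + 1 - x) * ((m : ℝ) + 1) < 1 := by nlinarith [h3, hm1]
  have hmp : (0 : ℝ) < (m : ℝ) + 1 := by linarith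
  have h5 : (m : ℝ) + 1 - x < 1 / ((m : ℝ) + 1) := by
    rw [lt_div_iff₀ hmp]; linarith
  exact ⟨hxm, hub, by linarith⟩

theorem stmt_15 (n : ℕ) (hn : 2 ≤ n) (f : ℕ → ℝ)
    (hf : ∀ m : ℕ, 1 ≤ m → 0 < f m ∧
      (f m) ^ n - (m : ℝ) * ∑ k ∈ Finset.range n, (f m) ^ k = 0) :
    (∀ m : ℕ, 1 ≤ m → f (m + 1) / ((m : ℝ) + 1) < f m / (m : ℝ)) ∧
    Filter.Tendsto (fun m : ℕ => f m / (m : ℝ)) Filter.atTop (nhds 1) := by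
  have hb : ∀ m : ℕ, 1 ≤ m →
      (m : ℝ) < f m ∧ f m < (m : ℝ) + 1 ∧ (m : ℝ) + 1 - 1 / ((m : ℝ) + 1) < f m := by
    intro m hm
    obtain ⟨hpos, heq⟩ := hf m hm
    exact aux_bounds_15 n m hn hm (f m) hpos heq
  constructor
  · intro m hm
    have hm1 : (1 : ℝ) ≤ m := by exact_mod_cast hm
    obtain ⟨h1, h2, h3⟩ := hb m hm
    obtain ⟨h1', h2', h3'⟩ := hb (m + 1) (by omega)
    push_cast at h1' h2' h3'
    rw [div_lt_div_iff₀ (by linarith) (by linarith)]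
    have hinv : (1 / ((m : ℝ) + 1)) * ((m : ℝ) + 1) = 1 := by
      field_simp
    nlinarith [h3, h2', hinv, hm1]
  · have hupper : Filter.Tendsto (fun m : ℕ => 1 + 1 / (m : ℝ))
        Filter.atTop (nhds 1) := by
      have := tendsto_one_div_atTop_nhds_zero_nat (𝕜 := ℝ)
      simpa using Filter.Tendsto.add (tendsto_const_nhds (x := (1 : ℝ))) this
    refine tendsto_of_tendsto_of_tendsto_of_le_of_le'
      (tendsto_const_nhds (x := (1 : ℝ))) hupper ?_ ?_
    · filter_upwards [Filter.eventually_atTop.mpr ⟨1, fun m hm => hm⟩] with m hm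
      obtain ⟨h1, _, _⟩ := hb m hm
      have hm0 : (0 : ℝ) < m := by exact_mod_cast hm
      rw [le_div_iff₀ hm0]; linarith
    · filter_upwards [Filter.eventually_atTop.mpr ⟨1, fun m hm => hm⟩] with m hm
      obtain ⟨_, h2, _⟩ := hb m hm
      have hm0 : (0 : ℝ) < m := by exact_mod_cast hm
      rw [div_le_iff₀ hm0]
      have hinv : (1 / (m : ℝ)) * (m : ℝ) = 1 := by field_simp
      nlinarith [hinv, hm0]
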